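/- Let P : ℝ → ℝ be a positive differentiable function satisfying P' = X·P + U, where X, U : ℝ → ℝ are functions with lim_{η→∞} X(η) = -1 and lim_{η→∞} U(η) = u for some u ≥ 0. Then lim_{η→∞} P(η) = u. -/

import Mathlib

open Filter Set

lemma aux_evtl_lt (f : ℝ → ℝ) (hf : Differentiable ℝ f) (c m a : ℝ) (hm : 0 < m)
    (h : ∀ t, a ≤ t → c ≤ f t → deriv f t ≤ -m) :
    ∀ᶠ t in atTop, f t < c := by
  -- Step A: there exists t₀ ≥ a with f t₀ < c
  have hA : ∃ t₀, a ≤ t₀ ∧ f t₀ < c := by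
    by_contra hcon
    push_neg at hcon
    have hall : ∀ t, a ≤ t → c ≤ f t := hcon
    have hderiv : ∀ t, a ≤ t → deriv f t ≤ -m := fun t ht => h t ht (hall t ht)
    set g : ℝ → ℝ := fun t => f t + m * t with hg
    have hgd : Differentiable ℝ g := hf.add (differentiable_const m |>.mul differentiable_id)
    have hganti : AntitoneOn g (Ici a) := by
      apply antitoneOn_of_deriv_nonpos (convex_Ici a) hgd.continuous.continuousOn
        hgd.differentiableOn
      intro x hx
      rw [interior_Ici] at hx
      have hd : HasDerivAt g (deriv f x + m) x :=
        (hf x).hasDerivAt.add (by simpa using (hasDerivAt_id x).const_mul m)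
      rw [show deriv g x = deriv f x + m from hd.deriv]
      have := hderiv x (le_of_lt hx)
      linarith
    have hfa : c ≤ f a := hall a le_rfl
    have hpos' : 0 < (f a - c + 1) / m := div_pos (by linarith) hm
    have hTa : a ≤ a + (f a - c + 1) / m := by linarith
    have hgT : f (a + (f a - c + 1) / m) + m * (a + (f a - c + 1) / m) ≤ f a + m * a :=
      hganti (mem_Ici.2 le_rfl) (mem_Ici.2 hTa) hTa
    have hfT : c ≤ f (a + (f a - c + 1) / m) := hall _ hTa
    have hmT : m * (a + (f a - c + 1) / m) = m * a + (f a - c + 1) := by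
      field_simp
    linarith
  obtain ⟨t₀, ht₀a, ht₀⟩ := hA
  -- Step B: f stays below c after t₀
  rw [eventually_atTop]
  refine ⟨t₀, fun t₁ ht₁ => ?_⟩
  by_contra hcon
  push_neg at hcon
  have ht₀t₁ : t₀ < t₁ := lt_of_le_of_ne ht₁ (by rintro rfl; exact absurd hcon (not_le.2 ht₀))
  have hSne : (Icc t₀ t₁ ∩ f ⁻¹' Ici c).Nonempty := ⟨t₁, ⟨ht₀t₁.le, le_rfl⟩, hcon⟩
  have hSclosed : IsClosed (Icc t₀ t₁ ∩ f ⁻¹' Ici c) :=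
    isClosed_Icc.inter (isClosed_Ici.preimage hf.continuous)
  have hSbdd : BddBelow (Icc t₀ t₁ ∩ f ⁻¹' Ici c) := ⟨t₀, fun x hx => hx.1.1⟩
  obtain ⟨s, hsmem, hsle⟩ : ∃ s ∈ Icc t₀ t₁ ∩ f ⁻¹' Ici c,
      ∀ t ∈ Icc t₀ t₁ ∩ f ⁻¹' Ici c, s ≤ t :=
    ⟨sInf _, hSclosed.csInf_mem hSne hSbdd, fun t ht => csInf_le hSbdd ht⟩
  have hsc : c ≤ f s := hsmem.2
  have hst₀ : t₀ < s :=
    lt_of_le_of_ne hsmem.1.1 (by rintro rfl; exact absurd hsc (not_le.2 ht₀))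
  have hbelow : ∀ t, t₀ ≤ t → t < s → f t < c := by
    intro t htt₀ hts
    by_contra hc2
    push_neg at hc2
    have : t ∈ Icc t₀ t₁ ∩ f ⁻¹' Ici c := ⟨⟨htt₀, le_trans hts.le hsmem.1.2⟩, hc2⟩
    exact absurd (hsle t this) (not_le.2 hts)
  have hslope : Tendsto (slope f s) (nhdsWithin s {s}ᶜ) (nhds (deriv f s)) :=
    hasDerivAt_iff_tendsto_slope.1 (hf s).hasDerivAt
  have hslope' : Tendsto (slope f s) (nhdsWithin s (Iio s)) (nhds (deriv f s)) :=
    hslope.mono_left (nhdsWithin_mono s (fun x hx => ne_of_lt hx))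
  have hge : 0 ≤ deriv f s := by
    refine ge_of_tendsto hslope' ?_
    filter_upwards [Ioo_mem_nhdsLT_of_mem (show s ∈ Ioc t₀ s from ⟨hst₀, le_rfl⟩)] with t ht
    have hft : f t < c := hbelow t ht.1.le ht.2
    have h1 : f t - f s < 0 := by linarith
    have h2 : t - s < 0 := by linarith [ht.2]
    have h3 : 0 < (f t - f s) / (t - s) := div_pos_of_neg_of_neg h1 h2
    rw [slope_def_field]
    exact h3.le
  have hle : deriv f s ≤ -m := h s (le_trans ht₀a hsmem.1.1) hsc
  linarith

/-- ODE comparison lemma: a positive solution of `P' = X·P + U` with `X → -1`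
and `U → u ≥ 0` converges to `u`. -/
theorem stmt_0 (P X U : ℝ → ℝ) (u : ℝ) (hu : 0 ≤ u)
    (hpos : ∀ η, 0 < P η) (hdiff : Differentiable ℝ P)
    (hode : ∀ η, deriv P η = X η * P η + U η)
    (hX : Filter.Tendsto X Filter.atTop (nhds (-1)))
    (hU : Filter.Tendsto U Filter.atTop (nhds u)) :
    Filter.Tendsto P Filter.atTop (nhds u) := by
  rw [Metric.tendsto_nhds]
  intro ε hε
  -- upper bound
  have hupper : ∀ᶠ t in atTop, P t < u + ε := by
    set δ := ε / (2 * (u + ε + 1)) with hδdef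
    have hK : (0:ℝ) < u + ε + 1 := by linarith
    have hδ : 0 < δ := div_pos hε (by linarith)
    have hδhalf : δ ≤ 1/2 := by
      rw [hδdef, div_le_div_iff₀ (by linarith) (by norm_num)]
      linarith
    have hδval : δ * (u + ε + 1) = ε / 2 := by
      rw [hδdef]; field_simp
    have hXe : ∀ᶠ t in atTop, dist (X t) (-1) < δ := (Metric.tendsto_nhds.1 hX) δ hδ
    have hUe : ∀ᶠ t in atTop, dist (U t) u < δ := (Metric.tendsto_nhds.1 hU) δ hδ
    obtain ⟨a, ha⟩ := eventually_atTop.1 (hXe.and hUe)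
    apply aux_evtl_lt P hdiff (u + ε) (ε/2) a (by linarith)
    intro t hta hPc
    obtain ⟨hXt, hUt⟩ := ha t hta
    rw [Real.dist_eq, abs_sub_lt_iff] at hXt hUt
    have hX1 : X t ≤ -1 + δ := by linarith
    have hU1 : U t ≤ u + δ := by linarith
    have hXP : X t * P t ≤ (-1 + δ) * P t :=
      mul_le_mul_of_nonneg_right hX1 (hpos t).le
    have h2 : (-1 + δ) * P t ≤ (-1 + δ) * (u + ε) :=
      mul_le_mul_of_nonpos_left hPc (by linarith)
    rw [hode]
    nlinarith
  -- lower bound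
  have hlower : ∀ᶠ t in atTop, u - ε < P t := by
    rcases le_or_gt u ε with hue | hue
    · exact Filter.Eventually.of_forall (fun t => by linarith [hpos t])
    · set δ := ε / (2 * (u - ε + 1)) with hδdef
      have hK : (0:ℝ) < u - ε + 1 := by linarith
      have hδ : 0 < δ := div_pos hε (by linarith)
      have hδval : δ * (u - ε + 1) = ε / 2 := by
        rw [hδdef]; field_simp
      have hXe : ∀ᶠ t in atTop, dist (X t) (-1) < δ := (Metric.tendsto_nhds.1 hX) δ hδ
      have hUe : ∀ᶠ t in atTop, dist (U t) u < δ := (Metric.tendsto_nhds.1 hU) δ hδ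
      obtain ⟨a, ha⟩ := eventually_atTop.1 (hXe.and hUe)
      have hev : ∀ᶠ t in atTop, (fun s => -P s) t < -(u - ε) := by
        apply aux_evtl_lt (fun s => -P s) hdiff.neg (-(u - ε)) (ε/2) a (by linarith)
        intro t hta hPc
        obtain ⟨hXt, hUt⟩ := ha t hta
        rw [Real.dist_eq, abs_sub_lt_iff] at hXt hUt
        have hP1 : P t ≤ u - ε := by simp at hPc; linarith
        have hX1 : -1 - δ ≤ X t := by linarith
        have hU1 : u - δ ≤ U t := by linarith
        have hXP : (-1 - δ) * P t ≤ X t * P t :=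
          mul_le_mul_of_nonneg_right hX1 (hpos t).le
        have h2 : (-1 - δ) * (u - ε) ≤ (-1 - δ) * P t :=
          mul_le_mul_of_nonpos_left hP1 (by linarith)
        have hdneg : deriv (fun s => -P s) t = -(deriv P t) := by
          simp [deriv.neg]
        rw [hdneg, hode]
        nlinarith
      filter_upwards [hev] with t ht
      linarith
  filter_upwards [hupper, hlower] with t h1 h2
  rw [Real.dist_eq, abs_sub_lt_iff]
  constructor <;> linarith
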